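/- Let k be an algebraically closed field of characteristic p > 2, let c, d ∈ {0, 1, ..., p-2} with d ∉ {c, p-c-2}, and let V(c), V(d) be the simple sl_2(k)-modules of highest weights c and d. Then Ext^1_{sl_2(k)}(V(c), V(d)) = 0; that is, every short exact sequence of sl_2(k)-modules 0 → V(d) → M → V(c) → 0 splits. -/

import Mathlib

section Aux

lemma casimir_eigen {k V : Type*} [Field k] [AddCommGroup V] [Module k V]
    (E H F : V →ₗ[k] V) (n : ℕ) (w : Fin (n + 1) → V)
    (hwH : ∀ j : Fin (n + 1), H (w j) = ((n : k) - 2 * ((j : ℕ) : k)) • w j)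
    (hwE : ∀ j : Fin (n + 1),
      E (w j) = (((j : ℕ) : k) * ((n : k) - ((j : ℕ) : k) + 1)) •
        w ⟨(j : ℕ) - 1, Nat.lt_of_le_of_lt (Nat.sub_le _ _) j.isLt⟩)
    (hwF : ∀ j : Fin (n + 1),
      F (w j) = if h : (j : ℕ) + 1 < n + 1 then w ⟨(j : ℕ) + 1, h⟩ else 0)
    (j : Fin (n + 1)) :
    (2 : k) • E (F (w j)) + (2 : k) • F (E (w j)) + H (H (w j)) =
      ((n : k) * ((n : k) + 2)) • w j := by
  have hj : (j : ℕ) < n + 1 := j.isLt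
  have hHH : H (H (w j)) = (((n : k) - 2 * ((j : ℕ) : k)) * ((n : k) - 2 * ((j : ℕ) : k))) • w j := by
    rw [hwH, map_smul, hwH, smul_smul]
  by_cases h1 : (j : ℕ) + 1 < n + 1
  · -- j < n
    have hEF : E (F (w j)) =
        (((((j : ℕ) + 1 : ℕ)) : k) * ((n : k) - (((j : ℕ) + 1 : ℕ) : k) + 1)) • w j := by
      rw [hwF, dif_pos h1, hwE]
      simp only [Fin.val_mk, Nat.add_sub_cancel, Fin.eta]
    rcases Nat.eq_zero_or_pos (j : ℕ) with h0 | h0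
    · -- j = 0
      have hc0 : ((j : ℕ) : k) = 0 := by rw [h0]; norm_num
      have hFE : F (E (w j)) = 0 := by
        rw [hwE, hc0, zero_mul, zero_smul, map_zero]
      rw [hEF, hFE, hHH, smul_smul, smul_zero, add_zero, ← add_smul]
      congr 1
      rw [hc0, h0]
      push_cast
      ring
    · -- j ≥ 1
      have h2 : (j : ℕ) - 1 + 1 < n + 1 := by omega
      have hFE : F (E (w j)) = (((j : ℕ) : k) * ((n : k) - ((j : ℕ) : k) + 1)) • w j := by
        rw [hwE, map_smul, hwF, dif_pos h2]
        congr 2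
        exact Fin.ext (by simp only [Fin.val_mk]; omega)
      rw [hEF, hFE, hHH, smul_smul, smul_smul, ← add_smul, ← add_smul]
      congr 1
      push_cast
      ring
  · -- j = n
    have hjn : (j : ℕ) = n := by omega
    have hcn : ((j : ℕ) : k) = (n : k) := by rw [hjn]
    have hEF : E (F (w j)) = 0 := by rw [hwF, dif_neg h1, map_zero]
    rcases Nat.eq_zero_or_pos (j : ℕ) with h0 | h0
    · have hn0 : (n : k) = 0 := by rw [← hcn, h0]; norm_num
      have hc0 : ((j : ℕ) : k) = 0 := by rw [h0]; norm_num
      have hFE : F (E (w j)) = 0 := by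
        rw [hwE, hc0, zero_mul, zero_smul, map_zero]
      simp [hEF, hFE, hHH, hn0, hc0]
    · have h2 : (j : ℕ) - 1 + 1 < n + 1 := by omega
      have hFE : F (E (w j)) = (((j : ℕ) : k) * ((n : k) - ((j : ℕ) : k) + 1)) • w j := by
        rw [hwE, map_smul, hwF, dif_pos h2]
        congr 2
        exact Fin.ext (by simp only [Fin.val_mk]; omega)
      rw [hEF, hFE, hHH, smul_zero, zero_add, smul_smul, ← add_smul]
      congr 1
      rw [hcn]
      ring

variable {k A : Type*} [CommRing k] [Ring A] [Algebra k A] (E H F : A)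
variable (he : H * E = E * H + (2:k) • E) (hf : H * F = F * H + (-2:k) • F)
  (hef : E * F = F * E + H)

include he hef in
lemma casimir_comm_E :
    ((2:k) • (E*F) + (2:k) • (F*E) + H*H) * E = E * ((2:k) • (E*F) + (2:k) • (F*E) + H*H) := by
  have hfe : F * E = E * F - H := by rw [hef]; abel
  have e1 : (E*F)*E = E*(E*F) - E*H := by
    rw [mul_assoc, hfe, mul_sub]
  have e2 : (F*E)*E = E*(E*F) - E*H - E*H - (2:k) • E := by
    calc (F*E)*E = (E*F - H)*E := by rw [hfe]
      _ = E*(F*E) - H*E := by noncomm_ring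
      _ = E*(E*F - H) - (E*H + (2:k) • E) := by rw [hfe, he]
      _ = E*(E*F) - E*H - E*H - (2:k) • E := by noncomm_ring
  have e3 : (H*H)*E = E*(H*H) + (4:k) • (E*H) + (4:k) • E := by
    calc (H*H)*E = H*(H*E) := by rw [mul_assoc]
      _ = H*(E*H + (2:k) • E) := by rw [he]
      _ = (H*E)*H + (2:k) • (H*E) := by rw [mul_add, mul_smul_comm, mul_assoc]
      _ = (E*H + (2:k) • E)*H + (2:k) • (E*H + (2:k) • E) := by rw [he]
      _ = E*(H*H) + (4:k) • (E*H) + (4:k) • E := by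
          simp only [add_mul, smul_mul_assoc, mul_assoc, smul_add, smul_smul]
          module
  have e4 : E*(F*E) = E*(E*F) - E*H := by rw [hfe, mul_sub]
  simp only [add_mul, mul_add, smul_mul_assoc, mul_smul_comm]
  rw [e1, e2, e3, e4]
  module

include hf hef in
lemma casimir_comm_F :
    ((2:k) • (E*F) + (2:k) • (F*E) + H*H) * F = F * ((2:k) • (E*F) + (2:k) • (F*E) + H*H) := by
  have f1 : (E*F)*F = F*(F*E) + F*H + H*F := by
    calc (E*F)*F = (F*E + H)*F := by rw [hef]
      _ = F*(E*F) + H*F := by noncomm_ring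
      _ = F*(F*E + H) + H*F := by rw [hef]
      _ = F*(F*E) + F*H + H*F := by noncomm_ring
  have f2 : (F*E)*F = F*(F*E) + F*H := by
    calc (F*E)*F = F*(E*F) := by rw [mul_assoc]
      _ = F*(F*E + H) := by rw [hef]
      _ = F*(F*E) + F*H := by rw [mul_add]
  have f3 : (H*H)*F = F*(H*H) - (2:k) • (F*H) - (2:k) • (H*F) := by
    calc (H*H)*F = H*(H*F) := by rw [mul_assoc]
      _ = H*(F*H + (-2:k) • F) := by rw [hf]
      _ = (H*F)*H + (-2:k) • (H*F) := by rw [mul_add, mul_smul_comm, mul_assoc]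
      _ = (F*H + (-2:k) • F)*H + (-2:k) • (H*F) := by rw [hf]
      _ = F*(H*H) - (2:k) • (F*H) - (2:k) • (H*F) := by
          simp only [add_mul, smul_mul_assoc, mul_assoc]
          module
  have f4 : F*(E*F) = F*(F*E) + F*H := by rw [hef, mul_add]
  simp only [add_mul, mul_add, smul_mul_assoc, mul_smul_comm]
  rw [f1, f2, f3, f4]
  module

include he hf in
lemma casimir_comm_H :
    ((2:k) • (E*F) + (2:k) • (F*E) + H*H) * H = H * ((2:k) • (E*F) + (2:k) • (F*E) + H*H) := by
  have he' : E * H = H * E + (-2:k) • E := by rw [he]; module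
  have hf' : F * H = H * F + (2:k) • F := by rw [hf]; module
  have g1 : (E*F)*H = H*(E*F) := by
    calc (E*F)*H = E*(F*H) := by rw [mul_assoc]
      _ = E*(H*F) + (2:k) • (E*F) := by rw [hf', mul_add, mul_smul_comm]
      _ = (E*H)*F + (2:k) • (E*F) := by rw [mul_assoc]
      _ = (H*E)*F + (-2:k) • (E*F) + (2:k) • (E*F) := by
          rw [he', add_mul, smul_mul_assoc, mul_assoc]
      _ = H*(E*F) := by rw [mul_assoc]; module
  have g2 : (F*E)*H = H*(F*E) := by
    calc (F*E)*H = F*(E*H) := by rw [mul_assoc]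
      _ = F*(H*E) + (-2:k) • (F*E) := by rw [he', mul_add, mul_smul_comm]
      _ = (F*H)*E + (-2:k) • (F*E) := by rw [mul_assoc]
      _ = (H*F)*E + (2:k) • (F*E) + (-2:k) • (F*E) := by
          rw [hf', add_mul, smul_mul_assoc, mul_assoc]
      _ = H*(F*E) := by rw [mul_assoc]; module
  simp only [add_mul, mul_add, smul_mul_assoc, mul_smul_comm]
  rw [g1, g2, mul_assoc]

end Aux


/-- Let `k` be algebraically closed of characteristic `p > 2`, let
`c, d ∈ {0, ..., p-2}` with `d ∉ {c, p-c-2}`.  Then every short exact sequence of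
`sl₂(k)`-modules `0 → V(d) → M → V(c) → 0` splits, i.e. `Ext¹(V(c), V(d)) = 0`.

A representation of `sl₂(k)` is a triple of endomorphisms `E, H, F` satisfying the
commutator relations; the submodule `N ≅ V(d)` and the quotient `M/N ≅ V(c)` are
specified via bases realizing the standard highest weight actions. -/
theorem ext_vanishing_splits
    (k : Type*) [Field k] [IsAlgClosed k] (p : ℕ) (hp : p.Prime) (hp2 : 2 < p)
    [CharP k p]
    (c d : ℕ) (hc : c ≤ p - 2) (hd : d ≤ p - 2) (hdc : d ≠ c)
    (hdc' : d ≠ p - c - 2)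
    (M : Type*) [AddCommGroup M] [Module k M]
    (E H F : Module.End k M)
    (hHE : ⁅H, E⁆ = (2 : k) • E) (hHF : ⁅H, F⁆ = (-2 : k) • F) (hEF : ⁅E, F⁆ = H)
    (N : Submodule k M)
    (hNE : N ≤ N.comap E) (hNH : N ≤ N.comap H) (hNF : N ≤ N.comap F)
    -- `N ≅ V(d)`:
    (w : Fin (d + 1) → M) (hwN : ∀ j, w j ∈ N) (hwli : LinearIndependent k w)
    (hwspan : Submodule.span k (Set.range w) = N)
    (hwH : ∀ j : Fin (d + 1), H (w j) = ((d : k) - 2 * ((j : ℕ) : k)) • w j)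
    (hwE : ∀ j : Fin (d + 1),
      E (w j) = (((j : ℕ) : k) * ((d : k) - ((j : ℕ) : k) + 1)) •
        w ⟨(j : ℕ) - 1, Nat.lt_of_le_of_lt (Nat.sub_le _ _) j.isLt⟩)
    (hwF : ∀ j : Fin (d + 1),
      F (w j) = if h : (j : ℕ) + 1 < d + 1 then w ⟨(j : ℕ) + 1, h⟩ else 0)
    -- `M / N ≅ V(c)`:
    (u : Module.Basis (Fin (c + 1)) k (M ⧸ N))
    (huH : ∀ j : Fin (c + 1),
      Submodule.mapQ N N H hNH (u j) = ((c : k) - 2 * ((j : ℕ) : k)) • u j)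
    (huE : ∀ j : Fin (c + 1),
      Submodule.mapQ N N E hNE (u j) =
        (((j : ℕ) : k) * ((c : k) - ((j : ℕ) : k) + 1)) •
          u ⟨(j : ℕ) - 1, Nat.lt_of_le_of_lt (Nat.sub_le _ _) j.isLt⟩)
    (huF : ∀ j : Fin (c + 1),
      Submodule.mapQ N N F hNF (u j) =
        if h : (j : ℕ) + 1 < c + 1 then u ⟨(j : ℕ) + 1, h⟩ else 0) :
    ∃ N' : Submodule k M,
      (∀ x ∈ N', E x ∈ N') ∧ (∀ x ∈ N', H x ∈ N') ∧ (∀ x ∈ N', F x ∈ N') ∧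
      IsCompl N N' := by

  rw [Ring.lie_def] at hHE hHF hEF
  have he : H * E = E * H + (2:k) • E := by rw [← hHE]; abel
  have hf : H * F = F * H + (-2:k) • F := by rw [← hHF]; abel
  have hef : E * F = F * E + H := by rw [← hEF]; abel
  set C : Module.End k M := (2:k) • (E*F) + (2:k) • (F*E) + H*H with hCdef
  have hCE : C * E = E * C := casimir_comm_E E H F he hef
  have hCF : C * F = F * C := casimir_comm_F E H F hf hef
  have hCH : C * H = H * C := casimir_comm_H E H F he hf
  set μd : k := (d:k) * ((d:k) + 2) with hμd
  set μc : k := (c:k) * ((c:k) + 2) with hμc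
  -- the two Casimir scalars differ
  have hμ : μc - μd ≠ 0 := by
    intro hzero
    have key : ((d:k) - (c:k)) * ((d:k) + (c:k) + 2) = μd - μc := by
      rw [hμd, hμc]; ring
    have h0 : ((d:k) - (c:k)) * ((d:k) + (c:k) + 2) = 0 := by
      rw [key]
      have hz' : μd - μc = 0 := by rw [← neg_sub, hzero, neg_zero]
      exact hz'
    rcases mul_eq_zero.mp h0 with h1 | h1
    · have : (d:k) = (c:k) := sub_eq_zero.mp h1
      exact hdc (CharP.natCast_injOn_Iio k p (by simp; omega) (by simp; omega) this)
    · have h2 : (((d + c + 2 : ℕ)) : k) = 0 := by push_cast; linear_combination h1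
      have h3 : p ∣ d + c + 2 := (CharP.cast_eq_zero_iff k p _).mp h2
      obtain ⟨t, ht⟩ := h3
      have ht2 : t < 2 := by
        by_contra hh
        push_neg at hh
        have : 2 * p ≤ p * t := by
          calc 2 * p = p * 2 := by ring
          _ ≤ p * t := Nat.mul_le_mul_left p hh
        omega
      interval_cases t
      · omega
      · exact hdc' (by omega)
  -- C acts on N as μd
  have hCN : ∀ x ∈ N, C x = μd • x := by
    have hle : N ≤ LinearMap.ker (C - μd • (1 : Module.End k M)) := by
      rw [← hwspan, Submodule.span_le]
      rintro _ ⟨j, rfl⟩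
      simp only [SetLike.mem_coe, LinearMap.mem_ker, LinearMap.sub_apply, LinearMap.smul_apply,
        Module.End.one_apply, sub_eq_zero]
      have := casimir_eigen E H F d w hwH hwE hwF j
      simpa only [hCdef, LinearMap.add_apply, LinearMap.smul_apply, Module.End.mul_apply]
        using this
    intro x hx
    have := hle hx
    simpa only [LinearMap.mem_ker, LinearMap.sub_apply, LinearMap.smul_apply,
      Module.End.one_apply, sub_eq_zero] using this
  -- C acts on M ⧸ N as μc
  set Eb := Submodule.mapQ N N E hNE with hEb
  set Hb := Submodule.mapQ N N H hNH with hHb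
  set Fb := Submodule.mapQ N N F hNF with hFb
  have hQbar : ∀ y : M ⧸ N, (2:k) • Eb (Fb y) + (2:k) • Fb (Eb y) + Hb (Hb y) = μc • y := by
    have hfg : (2:k) • (Eb ∘ₗ Fb) + (2:k) • (Fb ∘ₗ Eb) + Hb ∘ₗ Hb
        = μc • (LinearMap.id : (M ⧸ N) →ₗ[k] (M ⧸ N)) := by
      apply u.ext
      intro j
      have := casimir_eigen Eb Hb Fb c u huH huE huF j
      simpa only [LinearMap.add_apply, LinearMap.smul_apply, LinearMap.comp_apply,
        LinearMap.id_apply] using this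
    intro y
    have := LinearMap.ext_iff.mp hfg y
    simpa only [LinearMap.add_apply, LinearMap.smul_apply, LinearMap.comp_apply,
      LinearMap.id_apply] using this
  have hCQ : ∀ x : M, C x - μc • x ∈ N := by
    intro x
    rw [← Submodule.Quotient.mk_eq_zero N]
    have e1 : (Submodule.Quotient.mk (C x - μc • x) : M ⧸ N)
        = (2:k) • Eb (Fb (Submodule.Quotient.mk x)) + (2:k) • Fb (Eb (Submodule.Quotient.mk x))
          + Hb (Hb (Submodule.Quotient.mk x)) - μc • (Submodule.Quotient.mk x : M ⧸ N) := by
      rw [hCdef]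
      simp only [LinearMap.add_apply, LinearMap.smul_apply, Module.End.mul_apply]
      rw [hEb, hHb, hFb]
      simp only [Submodule.Quotient.mk_sub, Submodule.Quotient.mk_add,
        Submodule.Quotient.mk_smul, Submodule.mapQ_apply]
    rw [e1, hQbar, sub_self]
  -- the complement
  refine ⟨LinearMap.ker (C - μc • (1 : Module.End k M)), ?_, ?_, ?_, ?_⟩
  · intro x hx
    simp only [LinearMap.mem_ker, LinearMap.sub_apply, LinearMap.smul_apply,
      Module.End.one_apply, sub_eq_zero] at hx ⊢
    have hcomm : C (E x) = E (C x) := by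
      have : (C * E) x = (E * C) x := by rw [hCE]
      simpa only [Module.End.mul_apply] using this
    rw [hcomm, hx, map_smul]
  · intro x hx
    simp only [LinearMap.mem_ker, LinearMap.sub_apply, LinearMap.smul_apply,
      Module.End.one_apply, sub_eq_zero] at hx ⊢
    have hcomm : C (H x) = H (C x) := by
      have : (C * H) x = (H * C) x := by rw [hCH]
      simpa only [Module.End.mul_apply] using this
    rw [hcomm, hx, map_smul]
  · intro x hx
    simp only [LinearMap.mem_ker, LinearMap.sub_apply, LinearMap.smul_apply,
      Module.End.one_apply, sub_eq_zero] at hx ⊢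
    have hcomm : C (F x) = F (C x) := by
      have : (C * F) x = (F * C) x := by rw [hCF]
      simpa only [Module.End.mul_apply] using this
    rw [hcomm, hx, map_smul]
  · constructor
    · rw [Submodule.disjoint_def]
      intro x hxN hxK
      simp only [LinearMap.mem_ker, LinearMap.sub_apply, LinearMap.smul_apply,
        Module.End.one_apply, sub_eq_zero] at hxK
      have h1 : (μc - μd) • x = 0 := by
        rw [sub_smul, ← hxK, hCN x hxN, sub_self]
      rcases smul_eq_zero.mp h1 with h | h
      · exact absurd h hμ
      · exact h
    · rw [codisjoint_iff, eq_top_iff]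
      intro x _
      set b : M := (μc - μd)⁻¹ • (C x - μd • x) with hb
      have hnmem : C x - μc • x ∈ N := hCQ x
      have hxb : x - b ∈ N := by
        have hx' : x - b = (-(μc - μd)⁻¹) • (C x - μc • x) := by
          rw [hb]
          match_scalars <;> (field_simp; try ring)
        rw [hx']
        exact N.smul_mem _ hnmem
      have hbK : b ∈ LinearMap.ker (C - μc • (1 : Module.End k M)) := by
        have hC2 := hCN _ hnmem
        rw [map_sub, map_smul, smul_sub, smul_smul] at hC2
        have hC2' : C (C x) = μc • C x + (μd • C x - (μd * μc) • x) := by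
          rw [← hC2]; abel
        simp only [LinearMap.mem_ker, LinearMap.sub_apply, LinearMap.smul_apply,
          Module.End.one_apply, sub_eq_zero, hb, map_smul, map_sub, hC2']
        match_scalars <;> ring
      have : x = (x - b) + b := by abel
      rw [this]
      exact Submodule.add_mem_sup hxb hbK
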